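/- (Double robustness of the g-estimating equation for δ.) Suppose δ^D(x) ≠ 0 for every x ∈ 𝒳. (i) For every function w : {0,1} × 𝒳 → ℝ and every x ∈ 𝒳, E[ ( Y − D·δ(X) − p_0^Y(X) + p_0^D(X)·δ(X) ) · w(Z, X) | X = x ] = 0, where δ, p_0^Y, p_0^D are the true nuisance functions. (ii) For all functions pY*, pD* : 𝒳 → ℝ and every x ∈ 𝒳, E[ ( Y − D·δ(X) − pY*(X) + pD*(X)·δ(X) ) · (2Z − 1)/f(Z | X) | X = x ] = 0, where f is the true conditional instrument density and δ the true conditional Wald estimand. -/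

import Mathlib

open MeasureTheory

/-- Conditional mean of `W` given event `A`: `E[W | A] = (∫_A W dμ) / μ(A)`. -/
noncomputable def condMean {Ω : Type*} [MeasurableSpace Ω] (μ : Measure Ω)
    (W : Ω → ℝ) (A : Set Ω) : ℝ :=
  (∫ ω in A, W ω ∂μ) / (μ A).toReal

lemma aux_setIntegral {Ω : Type*} [MeasurableSpace Ω] (μ : Measure Ω) [IsProbabilityMeasure μ]
    (Y D : Ω → ℝ) (hYint : Integrable Y μ) (hDint : Integrable D μ)
    {A : Set Ω} (hApos : 0 < μ A) (c k r : ℝ) :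
    ∫ ω in A, (Y ω - D ω * c - k) * r ∂μ
      = (condMean μ Y A - condMean μ D A * c - k) * r * (μ A).toReal := by
  have hAne : (μ A).toReal ≠ 0 := (ENNReal.toReal_pos hApos.ne' (measure_ne_top μ A)).ne'
  have h1 : ∫ ω in A, (Y ω - D ω * c - k) * r ∂μ
      = (∫ ω in A, (Y ω - D ω * c - k) ∂μ) * r := integral_mul_const r _
  have h2 : ∫ ω in A, (Y ω - D ω * c - k) ∂μ
      = (∫ ω in A, Y ω ∂μ) - (∫ ω in A, D ω * c ∂μ) - (μ A).toReal * k := by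
    rw [integral_sub (f := fun ω => Y ω - D ω * c) (g := fun _ => k)
        ((hYint.integrableOn).sub ((hDint.mul_const c).integrableOn))
        (integrable_const k).integrableOn,
      integral_sub (f := Y) (g := fun ω => D ω * c)
        hYint.integrableOn (hDint.mul_const c).integrableOn,
      setIntegral_const, smul_eq_mul, measureReal_def]
  have h3 : ∫ ω in A, D ω * c ∂μ = (∫ ω in A, D ω ∂μ) * c := integral_mul_const c _
  rw [h1, h2, h3]
  unfold condMean
  field_simp


/-- double robustness of the g-estimating equation for `δ`:
assuming `δ^D(x) ≠ 0` for every `x`,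
(i) for every `w : {0,1} × 𝒳 → ℝ` and every `x`,
`E[ (Y − D δ(X) − p_0^Y(X) + p_0^D(X) δ(X)) w(Z,X) | X = x ] = 0` with the true
nuisances; (ii) for all `pY*, pD* : 𝒳 → ℝ` and every `x`,
`E[ (Y − D δ(X) − pY*(X) + pD*(X) δ(X)) (2Z−1)/f(Z|X) | X = x ] = 0` with the true
`f` and the true conditional Wald estimand `δ`. -/
theorem g_equation_delta_doubly_robust
    {Ω : Type*} [MeasurableSpace Ω] (μ : Measure Ω) [IsProbabilityMeasure μ]
    {𝒳 : Type*} [Fintype 𝒳] [MeasurableSpace 𝒳] [MeasurableSingletonClass 𝒳]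
    (Z D Y : Ω → ℝ) (X : Ω → 𝒳)
    (hZmeas : Measurable Z) (hDmeas : Measurable D) (hXmeas : Measurable X)
    (hZ01 : ∀ ω, Z ω = 0 ∨ Z ω = 1) (hD01 : ∀ ω, D ω = 0 ∨ D ω = 1)
    (hYint : Integrable Y μ)
    -- positivity
    (hPos : ∀ (z : ℝ), (z = 0 ∨ z = 1) → ∀ (x : 𝒳),
      0 < μ ({ω | Z ω = z} ∩ {ω | X ω = x}))
    -- f(z | x) = μ(Z = z | X = x)
    (f : ℝ → 𝒳 → ℝ)
    (hf : ∀ (z : ℝ) (x : 𝒳),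
      f z x = (μ ({ω | Z ω = z} ∩ {ω | X ω = x})).toReal / (μ {ω | X ω = x}).toReal)
    -- p_z^Y, p_z^D, δ^Y, δ^D, and the conditional Wald estimand δ
    (pY pD : ℝ → 𝒳 → ℝ)
    (hpY : ∀ (z : ℝ) (x : 𝒳),
      pY z x = condMean μ Y ({ω | Z ω = z} ∩ {ω | X ω = x}))
    (hpD : ∀ (z : ℝ) (x : 𝒳),
      pD z x = condMean μ D ({ω | Z ω = z} ∩ {ω | X ω = x}))
    (δY δD δ : 𝒳 → ℝ)
    (hδY : ∀ x, δY x = pY 1 x - pY 0 x)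
    (hδD : ∀ x, δD x = pD 1 x - pD 0 x)
    (hδDne : ∀ x, δD x ≠ 0)
    (hδ : ∀ x, δ x = δY x / δD x) :
    (∀ (w : ℝ → 𝒳 → ℝ) (x : 𝒳),
      condMean μ
          (fun ω => (Y ω - D ω * δ (X ω) - pY 0 (X ω) + pD 0 (X ω) * δ (X ω))
            * w (Z ω) (X ω))
          {ω | X ω = x} = 0)
    ∧ (∀ (pYs pDs : 𝒳 → ℝ) (x : 𝒳),
      condMean μ
          (fun ω => (Y ω - D ω * δ (X ω) - pYs (X ω) + pDs (X ω) * δ (X ω))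
            * (2 * Z ω - 1) / f (Z ω) (X ω))
          {ω | X ω = x} = 0) := by
  have hDint : Integrable D μ := by
    refine (integrable_const (1:ℝ)).mono' hDmeas.aestronglyMeasurable (ae_of_all _ ?_)
    intro ω; rcases hD01 ω with h | h <;> simp [h]
  -- abbreviations
  set A : ℝ → 𝒳 → Set Ω := fun z x => {ω | Z ω = z} ∩ {ω | X ω = x} with hA
  have hAmeas : ∀ (z : ℝ) (x : 𝒳), MeasurableSet (A z x) := fun z x =>
    (hZmeas (measurableSet_singleton z)).inter (hXmeas (measurableSet_singleton x))
  have hδval : ∀ x, (pD 1 x - pD 0 x) * δ x = pY 1 x - pY 0 x := by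
    intro x
    rw [← hδD, ← hδY, hδ, mul_comm, div_mul_cancel₀ _ (hδDne x)]
  -- the key splitting computation
  have key : ∀ (x : 𝒳) (F : Ω → ℝ) (c k : ℝ) (r : ℝ → ℝ),
      (∀ ω, X ω = x → F ω = (Y ω - D ω * c - k) * r (Z ω)) →
      ∫ ω in {ω | X ω = x}, F ω ∂μ
        = (pY 0 x - pD 0 x * c - k) * r 0 * (μ (A 0 x)).toReal
          + (pY 1 x - pD 1 x * c - k) * r 1 * (μ (A 1 x)).toReal := by
    intro x F c k r hF
    have hsplit : {ω | X ω = x} = A 0 x ∪ A 1 x := by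
      ext ω
      simp only [hA, Set.mem_setOf_eq, Set.mem_union, Set.mem_inter_iff]
      rcases hZ01 ω with h | h <;> simp [h]
    have hdisj : Disjoint (A 0 x) (A 1 x) := by
      rw [Set.disjoint_left]
      rintro ω ⟨h0, -⟩ ⟨h1, -⟩
      rw [Set.mem_setOf_eq] at h0 h1
      rw [h0] at h1; norm_num at h1
    have hGint : ∀ s : ℝ, Integrable (fun ω => (Y ω - D ω * c - k) * s) μ :=
      fun s => ((hYint.sub (hDint.mul_const c)).sub (integrable_const k)).mul_const s
    have hEq : ∀ z : ℝ, Set.EqOn F (fun ω => (Y ω - D ω * c - k) * r z) (A z x) := by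
      intro z ω hω
      obtain ⟨hz, hx⟩ := hω
      rw [Set.mem_setOf_eq] at hz hx
      rw [hF ω hx, hz]
    have hFint : ∀ z : ℝ, IntegrableOn F (A z x) μ := fun z =>
      ((hGint (r z)).integrableOn).congr_fun (hEq z).symm (hAmeas z x)
    rw [hsplit, setIntegral_union hdisj (hAmeas 1 x) (hFint 0) (hFint 1)]
    have h0 := setIntegral_congr_fun (μ := μ) (hAmeas 0 x) (hEq 0)
    have h1 := setIntegral_congr_fun (μ := μ) (hAmeas 1 x) (hEq 1)
    rw [h0, h1, aux_setIntegral μ Y D hYint hDint (hPos 0 (Or.inl rfl) x) c k (r 0),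
      aux_setIntegral μ Y D hYint hDint (hPos 1 (Or.inr rfl) x) c k (r 1),
      ← hpY 0 x, ← hpD 0 x, ← hpY 1 x, ← hpD 1 x]
  constructor
  · intro w x
    have hv := hδval x
    have h := key x
      (fun ω => (Y ω - D ω * δ (X ω) - pY 0 (X ω) + pD 0 (X ω) * δ (X ω)) * w (Z ω) (X ω))
      (δ x) (pY 0 x - pD 0 x * δ x) (fun z => w z x)
      (by intro ω hx; simp only [hx]; ring)
    have hE : (∫ ω in {ω | X ω = x},
        (Y ω - D ω * δ (X ω) - pY 0 (X ω) + pD 0 (X ω) * δ (X ω)) * w (Z ω) (X ω) ∂μ) = 0 := by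
      rw [h]
      linear_combination (-(w 1 x * (μ (A 1 x)).toReal)) * hv
    simp only [condMean, hE, zero_div]
  · intro pYs pDs x
    have hv := hδval x
    have hm0 : (μ (A 0 x)).toReal ≠ 0 :=
      (ENNReal.toReal_pos (hPos 0 (Or.inl rfl) x).ne' (measure_ne_top μ _)).ne'
    have hm1 : (μ (A 1 x)).toReal ≠ 0 :=
      (ENNReal.toReal_pos (hPos 1 (Or.inr rfl) x).ne' (measure_ne_top μ _)).ne'
    have h := key x
      (fun ω => (Y ω - D ω * δ (X ω) - pYs (X ω) + pDs (X ω) * δ (X ω))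
        * (2 * Z ω - 1) / f (Z ω) (X ω))
      (δ x) (pYs x - pDs x * δ x) (fun z => (2 * z - 1) / f z x)
      (by intro ω hx; simp only [hx]; ring)
    have hE : (∫ ω in {ω | X ω = x},
        (Y ω - D ω * δ (X ω) - pYs (X ω) + pDs (X ω) * δ (X ω))
          * (2 * Z ω - 1) / f (Z ω) (X ω) ∂μ) = 0 := by
      rw [h]
      rw [hf 0 x, hf 1 x]
      field_simp
      rw [mul_div_assoc, mul_div_assoc, div_self hm0, div_self hm1]
      linear_combination (-(μ {ω | X ω = x}).toReal) * hv
    simp only [condMean, hE, zero_div]
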